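/- Let D be an infinite group and let F = ⊕_{d ∈ D} ℤ/2 be the group of finitely supported functions D → ℤ/2, with D acting on F by translation: (g·f)(g') = f(g'g). Then the semidirect product F ⋊ D has no abelian subgroup of finite index. -/

import Mathlib

private lemma comap_finiteIndex' {G G' : Type*} [Group G] [Group G'] (f : G' →* G)
    (H : Subgroup G) (h : H.index ≠ 0) : (H.comap f).index ≠ 0 := by
  rw [Subgroup.index_comap]
  intro h0
  exact h (Subgroup.index_eq_zero_of_relIndex_eq_zero h0)

private lemma infinite_of_finiteIndex' {G : Type*} [Group G] [Infinite G]
    (K : Subgroup G) (h : K.index ≠ 0) : Infinite K := by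
  by_contra hfin
  rw [not_infinite_iff_finite] at hfin
  have hcard : K.index * Nat.card K = Nat.card G := Subgroup.index_mul_card K
  have hG : Nat.card G = 0 := Nat.card_eq_zero_of_infinite
  have hKpos : 0 < Nat.card K := Nat.card_pos
  exact Nat.mul_ne_zero h hKpos.ne' (hcard.trans hG)

theorem translation_semidirect_product_not_virtually_abelian
    {D : Type*} [Group D] [Infinite D]
    (φ : D →* MulAut (Multiplicative (D →₀ ZMod 2)))
    (hφ : ∀ (g : D) (f : D →₀ ZMod 2) (x : D),
      Multiplicative.toAdd (φ g (Multiplicative.ofAdd f)) x = f (x * g)) :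
    ¬ ∃ H : Subgroup (Multiplicative (D →₀ ZMod 2) ⋊[φ] D),
        H.FiniteIndex ∧ ∀ a ∈ H, ∀ b ∈ H, a * b = b * a := by
  rintro ⟨H, hFI, hab⟩
  have hF : Infinite (Multiplicative (D →₀ ZMod 2)) := by
    refine Infinite.of_injective
      (fun d : D => Multiplicative.ofAdd (Finsupp.single d (1 : ZMod 2))) ?_
    intro a b hab'
    have : Finsupp.single a (1 : ZMod 2) = Finsupp.single b 1 := by
      simpa using hab'
    exact Finsupp.single_left_injective (by decide : (1 : ZMod 2) ≠ 0) this
  -- intersections with the two factors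
  set KF := H.comap (SemidirectProduct.inl :
    Multiplicative (D →₀ ZMod 2) →* Multiplicative (D →₀ ZMod 2) ⋊[φ] D) with hKF
  set KD := H.comap (SemidirectProduct.inr :
    D →* Multiplicative (D →₀ ZMod 2) ⋊[φ] D) with hKD
  have hKFi : Infinite KF :=
    infinite_of_finiteIndex' _ (comap_finiteIndex' _ _ hFI.index_ne_zero)
  have hKDi : Infinite KD :=
    infinite_of_finiteIndex' _ (comap_finiteIndex' _ _ hFI.index_ne_zero)
  -- pick a nontrivial element of KF
  obtain ⟨⟨x, hxK⟩, hx1⟩ := exists_ne (1 : KF)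
  have hxne : x ≠ 1 := by
    intro h; apply hx1; apply Subtype.ext; exact h
  set f₀ : D →₀ ZMod 2 := Multiplicative.toAdd x with hf₀
  have hf₀ne : f₀ ≠ 0 := by
    intro h; exact hxne h
  obtain ⟨x₀, hx₀⟩ := Finsupp.support_nonempty_iff.mpr hf₀ne
  -- every g in KD satisfies f₀ (x₀ * g) = f₀ x₀
  have key : ∀ g : KD, f₀ (x₀ * (g : D)) = f₀ x₀ := by
    rintro ⟨g, hgK⟩
    have hcomm := hab _ hxK _ hgK
    have h1 : (SemidirectProduct.inl x) * (SemidirectProduct.inr g) =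
        (⟨x, g⟩ : Multiplicative (D →₀ ZMod 2) ⋊[φ] D) := by
      ext <;> simp
    have h2 : (SemidirectProduct.inr g : Multiplicative (D →₀ ZMod 2) ⋊[φ] D) *
        (SemidirectProduct.inl x) =
        (⟨φ g x, g⟩ : Multiplicative (D →₀ ZMod 2) ⋊[φ] D) := by
      ext <;> simp
    rw [h1, h2] at hcomm
    have hx : x = φ g x := congrArg SemidirectProduct.left hcomm
    have := hφ g f₀ x₀
    have hx' : φ g (Multiplicative.ofAdd f₀) = x := by
      rw [hf₀]; simp [← hx]
    rw [hx'] at this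
    exact this.symm
  -- the map g ↦ x₀ * g : KD → support f₀ is injective, contradiction with finiteness
  have hinj : Function.Injective (fun g : KD => (⟨x₀ * (g : D), by
      rw [Finsupp.mem_support_iff, key g]
      exact Finsupp.mem_support_iff.mp hx₀⟩ : {y // y ∈ f₀.support})) := by
    intro a b hab'
    have : x₀ * (a : D) = x₀ * (b : D) := congrArg Subtype.val hab'
    exact Subtype.ext (mul_left_cancel this)
  have : Infinite {y // y ∈ f₀.support} := Infinite.of_injective _ hinj
  exact not_finite {y // y ∈ f₀.support}
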